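/- Let u0 : Ω → ℝ be 1-Lipschitz and for j ∈ ℕ, j ≥ 1, define A_j = {z ∈ Ω : min(α(z), β(z)) > 1/j}, where α and β measure the distance from z to the lower and upper endpoints of transport rays through z. Then u0 is differentiable at every point of A_j and the map z ↦ ∇u0(z) is Lipschitz continuous on A_j with Lipschitz constant 4j. -/

import Mathlib

open MeasureTheory Set
open scoped RealInnerProductSpace

noncomputable section

/-- `rayLow Ω u0 x` (denoted α in the paper): the distance from `x` to the lower
endpoint of a transport ray through `x`. -/
def rayLow {d : ℕ} (Ω : Set (EuclideanSpace ℝ (Fin d)))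
    (u0 : EuclideanSpace ℝ (Fin d) → ℝ) (x : EuclideanSpace ℝ (Fin d)) : ℝ :=
  sSup {r | ∃ z ∈ Ω, u0 x - u0 z = ‖x - z‖ ∧ r = ‖x - z‖}

/-- `rayHigh Ω u0 x` (denoted β in the paper): the distance from `x` to the upper
endpoint of a transport ray through `x`. -/
def rayHigh {d : ℕ} (Ω : Set (EuclideanSpace ℝ (Fin d)))
    (u0 : EuclideanSpace ℝ (Fin d) → ℝ) (x : EuclideanSpace ℝ (Fin d)) : ℝ :=
  sSup {r | ∃ z ∈ Ω, u0 z - u0 x = ‖x - z‖ ∧ r = ‖x - z‖}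

section Aux

variable {F : Type*} [NormedAddCommGroup F] [InnerProductSpace ℝ F]

/-- Quadratic expansion bound for `‖t•e + h‖`. -/
lemma aux_norm_smul_add (e h : F) {t : ℝ} (he : ‖e‖ = 1) (ht : 0 < t) (hh : ‖h‖ < t) :
    ‖t • e + h‖ ≤ t + ⟪e, h⟫ + ‖h‖ ^ 2 / (2 * (t - ‖h‖)) := by
  set s : ℝ := ⟪e, h⟫ with hs
  have hsle : |s| ≤ ‖h‖ := by
    calc |s| ≤ ‖e‖ * ‖h‖ := abs_real_inner_le_norm e h
    _ = ‖h‖ := by rw [he, one_mul]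
  have hs1 : -‖h‖ ≤ s := (abs_le.1 hsle).1
  have hs2 : s ≤ ‖h‖ := (abs_le.1 hsle).2
  have hN2 : ‖t • e + h‖ ^ 2 = t ^ 2 + 2 * t * s + ‖h‖ ^ 2 := by
    rw [norm_add_sq_real, norm_smul, real_inner_smul_left, Real.norm_eq_abs, abs_of_pos ht, he]
    ring
  have hN1 : t - ‖h‖ ≤ ‖t • e + h‖ := by
    have h2 := norm_sub_norm_le (t • e) (t • e + h)
    have h3 : t • e - (t • e + h) = -h := by abel
    rw [h3, norm_neg, norm_smul, Real.norm_eq_abs, abs_of_pos ht, he, mul_one] at h2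
    linarith
  have hd : 0 < t - ‖h‖ := by linarith
  have hq : 0 ≤ ‖h‖ ^ 2 / (2 * (t - ‖h‖)) := by positivity
  rcases le_or_gt ‖t • e + h‖ (t + s) with hle | hlt
  · linarith
  · have key : (‖t • e + h‖ - (t + s)) * (‖t • e + h‖ + (t + s)) = ‖h‖ ^ 2 - s ^ 2 := by
      nlinarith [hN2]
    have hden : 2 * (t - ‖h‖) ≤ ‖t • e + h‖ + (t + s) := by linarith
    have hmul := mul_le_mul_of_nonneg_left hden (by linarith : (0:ℝ) ≤ ‖t • e + h‖ - (t + s))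
    have h2 : (‖t • e + h‖ - (t + s)) * (2 * (t - ‖h‖)) ≤ ‖h‖ ^ 2 := by
      nlinarith [sq_nonneg s]
    have h3 : ‖t • e + h‖ - (t + s) ≤ ‖h‖ ^ 2 / (2 * (t - ‖h‖)) :=
      (le_div_iff₀ (by positivity)).2 h2
    linarith

/-- Point at distance exactly `t` along a ray towards `a`. -/
lemma ray_point {Ω : Set F} (hΩv : Convex ℝ Ω)
    {u0 : F → ℝ} (hu0 : LipschitzOnWith 1 u0 Ω)
    {z a : F} (hz : z ∈ Ω) (ha : a ∈ Ω) (heq : u0 z - u0 a = ‖z - a‖)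
    {t : ℝ} (ht : 0 < t) (hta : t ≤ ‖z - a‖) :
    z + (t / ‖z - a‖) • (a - z) ∈ Ω ∧ ‖z - (z + (t / ‖z - a‖) • (a - z))‖ = t ∧
      u0 z - u0 (z + (t / ‖z - a‖) • (a - z)) = t := by
  have hna : 0 < ‖z - a‖ := lt_of_lt_of_le ht hta
  set c : ℝ := t / ‖z - a‖ with hc
  have hc0 : 0 < c := div_pos ht hna
  have hc1 : c ≤ 1 := (div_le_one hna).2 hta
  have hct : c * ‖z - a‖ = t := div_mul_cancel₀ t hna.ne'
  set p : F := z + c • (a - z) with hpdef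
  have hpΩ : p ∈ Ω := by
    have hmem := hΩv hz ha (by linarith : (0:ℝ) ≤ 1 - c) hc0.le (by ring)
    have hpe : p = (1 - c) • z + c • a := by
      rw [hpdef, sub_smul, one_smul, smul_sub]; abel
    rw [hpe]; exact hmem
  have hzp : z - p = c • (z - a) := by rw [hpdef, smul_sub, smul_sub]; abel
  have hnzp : ‖z - p‖ = t := by
    rw [hzp, norm_smul, Real.norm_eq_abs, abs_of_pos hc0, hct]
  have hpa : p - a = (1 - c) • (z - a) := by
    rw [hpdef, sub_smul, one_smul, smul_sub, smul_sub]; abel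
  have hnpa : ‖p - a‖ = ‖z - a‖ - t := by
    rw [hpa, norm_smul, Real.norm_eq_abs, abs_of_nonneg (by linarith : (0:ℝ) ≤ 1 - c)]
    rw [sub_mul, one_mul, hct]
  have hL := lipschitzOnWith_iff_dist_le_mul.1 hu0
  have l1 : |u0 z - u0 p| ≤ t := by
    have := hL z hz p hpΩ
    rw [Real.dist_eq, dist_eq_norm, hnzp] at this
    simpa using this
  have l2 : |u0 p - u0 a| ≤ ‖z - a‖ - t := by
    have := hL p hpΩ a ha
    rw [Real.dist_eq, dist_eq_norm, hnpa] at this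
    simpa using this
  refine ⟨hpΩ, hnzp, ?_⟩
  have l1' := abs_le.1 l1
  have l2' := abs_le.1 l2
  linarith [l1'.1, l1'.2, l2'.1, l2'.2]

/-- Existence of a unit ray direction through a point with room on both sides. -/
lemma exists_ray_dir {Ω : Set F} (hΩv : Convex ℝ Ω) {u0 : F → ℝ}
    (hu0 : LipschitzOnWith 1 u0 Ω) {z : F} (hz : z ∈ Ω) {t : ℝ} (ht : 0 < t)
    (hlow : ∃ a ∈ Ω, u0 z - u0 a = ‖z - a‖ ∧ t ≤ ‖z - a‖)
    (hhigh : ∃ b ∈ Ω, u0 b - u0 z = ‖z - b‖ ∧ t ≤ ‖z - b‖) :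
    ∃ e : F, ‖e‖ = 1 ∧ z + t • e ∈ Ω ∧ z - t • e ∈ Ω ∧
      u0 (z + t • e) = u0 z + t ∧ u0 (z - t • e) = u0 z - t := by
  obtain ⟨a, haΩ, hae, hat⟩ := hlow
  obtain ⟨b, hbΩ, hbe, hbt⟩ := hhigh
  have hu0' : LipschitzOnWith 1 (fun x => -u0 x) Ω := by
    rw [lipschitzOnWith_iff_dist_le_mul] at hu0 ⊢
    intro x hx y hy
    have := hu0 x hx y hy
    simp only [Real.dist_eq] at this ⊢
    rw [show -u0 x - -u0 y = -(u0 x - u0 y) by ring, abs_neg]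
    exact this
  obtain ⟨hpΩ, hnzp, hvp⟩ := ray_point hΩv hu0 hz haΩ hae ht hat
  have hbe' : (fun x => -u0 x) z - (fun x => -u0 x) b = ‖z - b‖ := by
    show -u0 z - -u0 b = ‖z - b‖
    linarith
  obtain ⟨hqΩ, hnzq, hvq⟩ := ray_point hΩv hu0' hz hbΩ hbe' ht hbt
  set p : F := z + (t / ‖z - a‖) • (a - z) with hpdef
  set q : F := z + (t / ‖z - b‖) • (b - z) with hqdef
  have hvq2 : -u0 z - -u0 q = t := hvq
  have hvq' : u0 q = u0 z + t := by linarith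
  have hvp' : u0 p = u0 z - t := by linarith
  set u : F := q - z with hudef
  set v : F := z - p with hvdef
  have hnu : ‖u‖ = t := by rw [hudef, norm_sub_rev]; exact hnzq
  have hnv : ‖v‖ = t := hnzp
  have hL := lipschitzOnWith_iff_dist_le_mul.1 hu0
  have habs : |u0 q - u0 p| ≤ ‖q - p‖ := by
    have := hL q hqΩ p hpΩ
    rw [Real.dist_eq, dist_eq_norm] at this
    simpa using this
  have hqp : q - p = u + v := by rw [hudef, hvdef]; abel
  have htri : ‖u + v‖ ≤ 2 * t := by
    calc ‖u + v‖ ≤ ‖u‖ + ‖v‖ := norm_add_le u v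
    _ = 2 * t := by rw [hnu, hnv]; ring
  have heqn : ‖u + v‖ = 2 * t := by
    have h1 : 2 * t ≤ ‖u + v‖ := by
      rw [← hqp]
      have h2 : u0 q - u0 p = 2 * t := by rw [hvq', hvp']; ring
      calc 2 * t = u0 q - u0 p := h2.symm
      _ ≤ |u0 q - u0 p| := le_abs_self _
      _ ≤ ‖q - p‖ := habs
    linarith
  have huv : u = v := by
    have e1 := norm_add_sq_real u v
    have e2 := norm_sub_sq_real u v
    rw [heqn, hnu, hnv] at e1
    rw [hnu, hnv] at e2
    have h0 : ‖u - v‖ ^ 2 = 0 := by nlinarith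
    have h1 : ‖u - v‖ = 0 := by
      have := sq_nonneg ‖u - v‖
      nlinarith [norm_nonneg (u - v)]
    exact sub_eq_zero.1 (norm_eq_zero.1 h1)
  refine ⟨t⁻¹ • u, ?_, ?_, ?_, ?_, ?_⟩
  · rw [norm_smul, Real.norm_eq_abs, abs_of_pos (inv_pos.2 ht), hnu]
    exact inv_mul_cancel₀ ht.ne'
  · have : z + t • t⁻¹ • u = q := by
      rw [smul_smul, mul_inv_cancel₀ ht.ne', one_smul, hudef]; abel
    rw [this]; exact hqΩ
  · have : z - t • t⁻¹ • u = p := by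
      rw [smul_smul, mul_inv_cancel₀ ht.ne', one_smul, huv, hvdef]; abel
    rw [this]; exact hpΩ
  · have : z + t • t⁻¹ • u = q := by
      rw [smul_smul, mul_inv_cancel₀ ht.ne', one_smul, hudef]; abel
    rw [this]; exact hvq'
  · have : z - t • t⁻¹ • u = p := by
      rw [smul_smul, mul_inv_cancel₀ ht.ne', one_smul, huv, hvdef]; abel
    rw [this]; exact hvp'

/-- Two-sided quadratic bound near a ray point. -/
lemma grad_bound {Ω : Set F} {u0 : F → ℝ} (hu0 : LipschitzOnWith 1 u0 Ω)
    {z e : F} {t : ℝ} (ht : 0 < t) (he : ‖e‖ = 1)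
    (hq : z + t • e ∈ Ω) (hp : z - t • e ∈ Ω)
    (hvq : u0 (z + t • e) = u0 z + t) (hvp : u0 (z - t • e) = u0 z - t)
    {w : F} (hw : w ∈ Ω) (hwz : ‖w - z‖ < t) :
    |u0 w - u0 z - ⟪e, w - z⟫| ≤ ‖w - z‖ ^ 2 / (2 * (t - ‖w - z‖)) := by
  have hL := lipschitzOnWith_iff_dist_le_mul.1 hu0
  set h : F := w - z with hhdef
  -- upper bound
  have hup : u0 w ≤ u0 z + ⟪e, h⟫ + ‖h‖ ^ 2 / (2 * (t - ‖h‖)) := by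
    have l1 : |u0 w - u0 (z - t • e)| ≤ ‖w - (z - t • e)‖ := by
      have := hL w hw (z - t • e) hp
      rw [Real.dist_eq, dist_eq_norm] at this
      simpa using this
    have heqv : w - (z - t • e) = t • e + h := by rw [hhdef]; abel
    have l2 : ‖w - (z - t • e)‖ ≤ t + ⟪e, h⟫ + ‖h‖ ^ 2 / (2 * (t - ‖h‖)) := by
      rw [heqv]; exact aux_norm_smul_add e h he ht hwz
    have l3 := (abs_le.1 l1).2
    rw [hvp] at l3
    linarith
  -- lower bound
  have hlo : u0 z + ⟪e, h⟫ - ‖h‖ ^ 2 / (2 * (t - ‖h‖)) ≤ u0 w := by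
    have l1 : |u0 (z + t • e) - u0 w| ≤ ‖(z + t • e) - w‖ := by
      have := hL (z + t • e) hq w hw
      rw [Real.dist_eq, dist_eq_norm] at this
      simpa using this
    have heqv : (z + t • e) - w = t • e + (-h) := by rw [hhdef]; abel
    have hnh : ‖(-h : F)‖ < t := by rwa [norm_neg]
    have l2 : ‖(z + t • e) - w‖ ≤ t + ⟪e, -h⟫ + ‖(-h : F)‖ ^ 2 / (2 * (t - ‖(-h : F)‖)) := by
      rw [heqv]; exact aux_norm_smul_add e (-h) he ht hnh
    rw [inner_neg_right, norm_neg] at l2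
    have l3 := (abs_le.1 l1).2
    rw [hvq] at l3
    linarith
  rw [abs_le]
  constructor <;> linarith

/-- Differentiability at a ray point. -/
lemma grad_exists [CompleteSpace F] {Ω : Set F} {u0 : F → ℝ} (hu0 : LipschitzOnWith 1 u0 Ω)
    {z e : F} {t : ℝ} (ht : 0 < t) (he : ‖e‖ = 1)
    (hq : z + t • e ∈ Ω) (hp : z - t • e ∈ Ω)
    (hvq : u0 (z + t • e) = u0 z + t) (hvp : u0 (z - t • e) = u0 z - t) :
    HasGradientWithinAt u0 e Ω z := by
  rw [hasGradientWithinAt_iff_hasFDerivWithinAt]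
  refine HasFDerivWithinAt.of_isLittleO ?_
  rw [Asymptotics.isLittleO_iff]
  intro c hc
  have hr : 0 < min (t / 2) (c * t) := lt_min (by linarith) (by positivity)
  filter_upwards [mem_nhdsWithin_of_mem_nhds (Metric.ball_mem_nhds z hr),
    self_mem_nhdsWithin] with w hwball hwΩ
  have hdist : ‖w - z‖ < min (t / 2) (c * t) := by
    rwa [Metric.mem_ball, dist_eq_norm] at hwball
  have h1 : ‖w - z‖ < t := lt_of_lt_of_le (lt_of_lt_of_le hdist (min_le_left _ _)) (by linarith)
  have hb := grad_bound hu0 ht he hq hp hvq hvp hwΩ h1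
  have hle1 : ‖w - z‖ ≤ t / 2 := (lt_of_lt_of_le hdist (min_le_left _ _)).le
  have hle2 : ‖w - z‖ ≤ c * t := (lt_of_lt_of_le hdist (min_le_right _ _)).le
  have hnn : 0 ≤ ‖w - z‖ := norm_nonneg _
  have hdpos : (0:ℝ) < 2 * (t - ‖w - z‖) := by linarith
  have hchain : ‖w - z‖ ^ 2 / (2 * (t - ‖w - z‖)) ≤ c * ‖w - z‖ := by
    rw [div_le_iff₀ hdpos]
    have ha : ‖w - z‖ * ‖w - z‖ ≤ (c * t) * ‖w - z‖ := mul_le_mul_of_nonneg_right hle2 hnn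
    have hb2 : 0 ≤ (c * ‖w - z‖) * (t - 2 * ‖w - z‖) :=
      mul_nonneg (mul_nonneg hc.le hnn) (by linarith)
    nlinarith [ha, hb2]
  simp only [InnerProductSpace.toDual_apply_apply, Real.norm_eq_abs]
  calc |u0 w - u0 z - ⟪e, w - z⟫| ≤ ‖w - z‖ ^ 2 / (2 * (t - ‖w - z‖)) := hb
  _ ≤ c * ‖w - z‖ := hchain

end Aux

theorem stmt6 {d : ℕ} (hd : 1 ≤ d) (Ω : Set (EuclideanSpace ℝ (Fin d)))
    (hΩc : IsCompact Ω) (hΩv : Convex ℝ Ω)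
    (u0 : EuclideanSpace ℝ (Fin d) → ℝ) (hu0 : LipschitzOnWith 1 u0 Ω)
    (j : ℕ) (hj : 1 ≤ j) :
    ∃ G : EuclideanSpace ℝ (Fin d) → EuclideanSpace ℝ (Fin d),
      (∀ z ∈ {z | z ∈ Ω ∧ (1 : ℝ) / j < min (rayLow Ω u0 z) (rayHigh Ω u0 z)},
        HasGradientWithinAt u0 (G z) Ω z) ∧
      LipschitzOnWith (4 * j : NNReal) G
        {z | z ∈ Ω ∧ (1 : ℝ) / j < min (rayLow Ω u0 z) (rayHigh Ω u0 z)} := by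
  classical
  set A : Set (EuclideanSpace ℝ (Fin d)) :=
    {z | z ∈ Ω ∧ (1 : ℝ) / j < min (rayLow Ω u0 z) (rayHigh Ω u0 z)} with hA
  have hj1 : (1 : ℝ) ≤ (j : ℝ) := by exact_mod_cast hj
  have hj0 : (0 : ℝ) < (j : ℝ) := by linarith
  set t : ℝ := 1 / (j : ℝ) with htdef
  have ht : 0 < t := by positivity
  have hex : ∀ z ∈ A, ∃ e, ‖e‖ = 1 ∧ z + t • e ∈ Ω ∧ z - t • e ∈ Ω ∧
      u0 (z + t • e) = u0 z + t ∧ u0 (z - t • e) = u0 z - t := by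
    intro z hz
    obtain ⟨hzΩ, hmin⟩ := hz
    have hlowlt : t < rayLow Ω u0 z := lt_of_lt_of_le hmin (min_le_left _ _)
    have hhighlt : t < rayHigh Ω u0 z := lt_of_lt_of_le hmin (min_le_right _ _)
    have hne1 : {r | ∃ w ∈ Ω, u0 z - u0 w = ‖z - w‖ ∧ r = ‖z - w‖}.Nonempty :=
      ⟨0, z, hzΩ, by simp, by simp⟩
    have hne2 : {r | ∃ w ∈ Ω, u0 w - u0 z = ‖z - w‖ ∧ r = ‖z - w‖}.Nonempty :=
      ⟨0, z, hzΩ, by simp, by simp⟩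
    obtain ⟨r1, ⟨a, haΩ, hae, hre1⟩, hrt1⟩ := exists_lt_of_lt_csSup hne1 hlowlt
    obtain ⟨r2, ⟨b, hbΩ, hbe, hre2⟩, hrt2⟩ := exists_lt_of_lt_csSup hne2 hhighlt
    exact exists_ray_dir hΩv hu0 hzΩ ht ⟨a, haΩ, hae, (hre1 ▸ hrt1).le⟩
      ⟨b, hbΩ, hbe, (hre2 ▸ hrt2).le⟩
  choose! e he1 he2 he3 he4 he5 using hex
  refine ⟨e, ?_, ?_⟩
  · intro z hz
    exact grad_exists hu0 ht (he1 z hz) (he2 z hz) (he3 z hz) (he4 z hz) (he5 z hz)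
  · rw [lipschitzOnWith_iff_dist_le_mul]
    intro x hx y hy
    have hL := lipschitzOnWith_iff_dist_le_mul.1 hu0
    set u : EuclideanSpace ℝ (Fin d) := x - y with hudef
    set wv : EuclideanSpace ℝ (Fin d) := t • e x + t • e y with hwvdef
    have hA1 : (x + t • e x) - (y - t • e y) = u + wv := by rw [hudef, hwvdef]; abel
    have hA2 : (y + t • e y) - (x - t • e x) = wv - u := by rw [hudef, hwvdef]; abel
    have h1 : u0 (x + t • e x) - u0 (y - t • e y) ≤ ‖u + wv‖ := by
      have := hL _ (he2 x hx) _ (he3 y hy)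
      rw [Real.dist_eq, dist_eq_norm, hA1] at this
      have := (abs_le.1 (by simpa using this)).2
      linarith
    have h2 : u0 (y + t • e y) - u0 (x - t • e x) ≤ ‖wv - u‖ := by
      have := hL _ (he2 y hy) _ (he3 x hx)
      rw [Real.dist_eq, dist_eq_norm, hA2] at this
      have := (abs_le.1 (by simpa using this)).2
      linarith
    rw [he4 x hx, he5 y hy] at h1
    rw [he4 y hy, he5 x hx] at h2
    have key1 : 4 * t ≤ ‖u + wv‖ + ‖wv - u‖ := by linarith
    have par1 : ‖u + wv‖ ^ 2 + ‖wv - u‖ ^ 2 = 2 * ‖u‖ ^ 2 + 2 * ‖wv‖ ^ 2 := by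
      have e1 := norm_add_sq_real u wv
      have e2 := norm_sub_sq_real wv u
      have e3 := real_inner_comm u wv
      linarith
    have hwvn : ‖wv‖ ^ 2 = t ^ 2 * ‖e x + e y‖ ^ 2 := by
      have : wv = t • (e x + e y) := by rw [hwvdef, smul_add]
      rw [this, norm_smul, Real.norm_eq_abs, abs_of_pos ht, mul_pow]
    have par2 : ‖e x + e y‖ ^ 2 + ‖e x - e y‖ ^ 2 = 4 := by
      have e1 := norm_add_sq_real (e x) (e y)
      have e2 := norm_sub_sq_real (e x) (e y)
      rw [he1 x hx, he1 y hy] at e1 e2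
      linarith
    have sq1 : (4 * t) ^ 2 ≤ 2 * (‖u + wv‖ ^ 2 + ‖wv - u‖ ^ 2) := by
      nlinarith [sq_nonneg (‖u + wv‖ - ‖wv - u‖), norm_nonneg (u + wv), norm_nonneg (wv - u)]
    have hwv2 : ‖wv‖ ^ 2 = 4 * t ^ 2 - t ^ 2 * ‖e x - e y‖ ^ 2 := by
      rw [hwvn]; linear_combination t ^ 2 * par2
    have key2 : t ^ 2 * ‖e x - e y‖ ^ 2 ≤ ‖u‖ ^ 2 := by linarith
    have key3 : t * ‖e x - e y‖ ≤ ‖u‖ := by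
      have h1 : (t * ‖e x - e y‖) ^ 2 ≤ ‖u‖ ^ 2 := by rw [mul_pow]; exact key2
      have h2 := Real.sqrt_le_sqrt h1
      rwa [Real.sqrt_sq (mul_nonneg ht.le (norm_nonneg _)), Real.sqrt_sq (norm_nonneg u)] at h2
    have htj : t * (j : ℝ) = 1 := by
      rw [htdef]; exact one_div_mul_cancel hj0.ne'
    have hfin : ‖e x - e y‖ ≤ 4 * (j : ℝ) * ‖u‖ := by
      have h4 := mul_le_mul_of_nonneg_right key3 hj0.le
      nlinarith [mul_nonneg hj0.le (norm_nonneg u)]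
    rw [dist_eq_norm, dist_eq_norm, ← hudef]
    calc ‖e x - e y‖ ≤ 4 * (j : ℝ) * ‖u‖ := hfin
    _ = ((4 * j : NNReal) : ℝ) * ‖u‖ := by push_cast; ring
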